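/- arXiv:2309.05824 — 3 statements merged into one kernel-verified Lean document; each statement's English description precedes it below -/
import Mathlib

section
/- Let X be a locally compact metric space, p ∈ X, and g a homeomorphism of a neighbourhood of p onto a neighbourhood of p with g(p) = p. If g is topologically repelling at p (i.e., there is a neighbourhood U of p such that every forward g-orbit starting in U \ {p} eventually leaves U), then g⁻¹ is topologically attracting at p (i.e., there is a neighbourhood V of p on which the iterates g^[-n] converge uniformly to p as n → ∞). -/
open Topology Filter

/-- Let `X` be a locally compact metric space, `p ∈ X`, and `g` a homeomorphism of a
neighbourhood `W` of `p` onto a neighbourhood of `p` (with local inverse `ginv`), fixing `p`.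
If `g` is topologically repelling at `p` (all orbits in `U \ {p}` escape `U` for some
neighbourhood `U`), then `g⁻¹` is topologically attracting at `p`: its iterates converge
uniformly to `p` on some neighbourhood `V` of `p`. -/
theorem stmt2 {X : Type*} [MetricSpace X] [LocallyCompactSpace X] (p : X)
    (g ginv : X → X) (W : Set X) (hW : W ∈ 𝓝 p)
    (hgc : ContinuousOn g W) (hginvc : ContinuousOn ginv W)
    (hWnbhd : g '' W ∈ 𝓝 p)
    (hinv1 : ∀ x ∈ W, ginv (g x) = x) (hinv2 : ∀ x ∈ g '' W, g (ginv x) = x)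
    (hfix : g p = p)
    (hrep : ∃ U ∈ 𝓝 p, ∀ x ∈ U, x ≠ p → ∃ n : ℕ, g^[n] x ∉ U) :
    ∃ V ∈ 𝓝 p, TendstoUniformlyOn (fun n x => ginv^[n] x) (fun _ => p) Filter.atTop V := by
  obtain ⟨U, hU, hrepU⟩ := hrep
  obtain ⟨K, hKn, hKsub, hKc⟩ :=
    local_compact_nhds (x := p) (inter_mem (inter_mem hU hW) hWnbhd)
  have hKU : K ⊆ U := fun x hx => (hKsub hx).1.1
  have hKW : K ⊆ W := fun x hx => (hKsub hx).1.2
  have hKg : K ⊆ g '' W := fun x hx => (hKsub hx).2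
  have hKcl : IsClosed K := hKc.isClosed
  have hginvp : ginv p = p := by have := hinv1 p (mem_of_mem_nhds hW); rwa [hfix] at this
  have hginvCA : ContinuousAt ginv p := hginvc.continuousAt hW
  -- Lemma A: forward iterates of g undo backward iterates of ginv while staying in K
  have lemA : ∀ x : X, ∀ n : ℕ, (∀ j ≤ n, ginv^[j] x ∈ K) →
      ∀ m ≤ n, g^[m] (ginv^[n] x) = ginv^[n - m] x := by
    intro x n hx m
    induction m with
    | zero => intro _; simp
    | succ m ih =>
      intro hm
      have hm' : m ≤ n := by omega
      rw [Function.iterate_succ_apply' g m, ih hm']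
      have h1 : n - m = (n - (m + 1)) + 1 := by omega
      rw [h1, Function.iterate_succ_apply' ginv]
      exact hinv2 _ (hKg (hx _ (by omega)))
  -- Lemma B: limits of points with long forward orbits in K have full forward orbit in K
  have lemB : ∀ (y : X) (u : ℕ → X), Tendsto u atTop (𝓝 y) →
      (∀ m : ℕ, ∀ᶠ k in atTop, g^[m] (u k) ∈ K) → ∀ m, g^[m] y ∈ K := by
    intro y u hu hK'
    have key : ∀ m, g^[m] y ∈ K ∧ Tendsto (fun k => g^[m] (u k)) atTop (𝓝 (g^[m] y)) := by
      intro m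
      induction m with
      | zero =>
        refine ⟨hKcl.mem_of_tendsto (by simpa using hu) (by simpa using hK' 0), by simpa using hu⟩
      | succ m ih =>
        obtain ⟨hmem, htend⟩ := ih
        have hz : ContinuousWithinAt g W (g^[m] y) := hgc _ (hKW hmem)
        have hev : ∀ᶠ k in atTop, g^[m] (u k) ∈ W := (hK' m).mono (fun k hk => hKW hk)
        have h1 : Tendsto (fun k => g^[m] (u k)) atTop (𝓝[W] (g^[m] y)) :=
          tendsto_nhdsWithin_of_tendsto_nhds_of_eventually_within _ htend hev
        have h2 : Tendsto (fun k => g^[m + 1] (u k)) atTop (𝓝 (g^[m + 1] y)) := by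
          simp only [Function.iterate_succ_apply']
          exact hz.tendsto.comp h1
        exact ⟨hKcl.mem_of_tendsto h2 (hK' (m + 1)), h2⟩
    exact fun m => (key m).1
  -- Lemma C: sequences whose forward g-orbits stay in K for longer and longer times tend to p
  have lemC : ∀ (u : ℕ → X) (N : ℕ → ℕ), Tendsto N atTop atTop →
      (∀ᶠ k in atTop, ∀ m ≤ N k, g^[m] (u k) ∈ K) → Tendsto u atTop (𝓝 p) := by
    intro u N hN horb
    classical
    by_contra hcon
    rw [Metric.tendsto_atTop] at hcon
    push_neg at hcon
    obtain ⟨ε, hε, hfreq⟩ := hcon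
    have hfreq' : ∃ᶠ k in atTop, ε ≤ dist (u k) p ∧ ∀ m ≤ N k, g^[m] (u k) ∈ K := by
      rw [Filter.frequently_atTop]
      intro a
      obtain ⟨b, hb⟩ := (Filter.eventually_atTop.1 horb)
      obtain ⟨n, hn, hdist⟩ := hfreq (max a b)
      exact ⟨n, le_trans (le_max_left a b) hn, hdist, hb n (le_trans (le_max_right a b) hn)⟩
    obtain ⟨φ, hφ, hφP⟩ := Filter.extraction_of_frequently_atTop hfreq'
    have huK : ∀ k, u (φ k) ∈ K := fun k => by
      simpa using (hφP k).2 0 (Nat.zero_le _)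
    obtain ⟨z, hzK, ψ, hψ, hψt⟩ := hKc.tendsto_subseq huK
    have hzne : z ≠ p := by
      intro h
      subst h
      have h0 : Tendsto (fun k => dist (u (φ (ψ k))) z) atTop (𝓝 0) :=
        tendsto_iff_dist_tendsto_zero.mp hψt
      have := (h0.eventually (eventually_lt_nhds hε)).exists
      obtain ⟨k, hk⟩ := this
      exact absurd (hφP (ψ k)).1 (not_le.2 hk)
    have horbz : ∀ m, g^[m] z ∈ K := by
      refine lemB z (fun k => u (φ (ψ k))) hψt ?_
      intro m
      have hNt : Tendsto (fun k => N (φ (ψ k))) atTop atTop :=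
        hN.comp ((hφ.comp hψ).tendsto_atTop)
      filter_upwards [hNt.eventually_ge_atTop m] with k hk
      exact (hφP (ψ k)).2 m hk
    obtain ⟨n, hn⟩ := hrepU z (hKU hzK) hzne
    exact hn (hKU (horbz n))
  -- Lemma D: for each M, points whose first M backward iterates stay in K form a nbhd of p
  have lemD : ∀ M : ℕ, {x | ∀ j ≤ M, ginv^[j] x ∈ K} ∈ 𝓝 p := by
    intro M
    induction M with
    | zero =>
      filter_upwards [hKn] with x hx j hj
      interval_cases j
      simpa using hx
    | succ M ih =>
      have hpre : ginv ⁻¹' {x | ∀ j ≤ M, ginv^[j] x ∈ K} ∈ 𝓝 p := by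
        apply hginvCA.preimage_mem_nhds
        rwa [hginvp]
      filter_upwards [hKn, hpre] with x hx1 hx2 j hj
      match j with
      | 0 => simpa using hx1
      | Nat.succ s =>
        rw [Function.iterate_succ_apply]
        exact hx2 s (by omega)
  -- The attracting neighbourhood
  set V : Set X := {x | ∀ n : ℕ, ginv^[n] x ∈ K} with hVdef
  have hVmem : V ∈ 𝓝 p := by
    by_contra hV
    have hcl : p ∈ closure Vᶜ := by
      rw [← mem_interior_iff_mem_nhds] at hV
      rw [closure_compl]
      exact hV
    obtain ⟨x, hxV, hxt⟩ := mem_closure_iff_seq_limit.1 hcl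
    classical
    have hex : ∀ k, ∃ n : ℕ, ginv^[n] (x k) ∉ K := by
      intro k
      by_contra h
      push_neg at h
      exact hxV k h
    set n : ℕ → ℕ := fun k => Nat.find (hex k) with hndef
    have hnspec : ∀ k, ginv^[n k] (x k) ∉ K := fun k => Nat.find_spec (hex k)
    have hnmin : ∀ k, ∀ j < n k, ginv^[j] (x k) ∈ K := by
      intro k j hj
      by_contra h
      exact absurd (Nat.find_le h) (not_le.2 hj)
    have hnt : Tendsto n atTop atTop := by
      rw [Filter.tendsto_atTop]
      intro M
      filter_upwards [hxt.eventually (lemD M)] with k hk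
      by_contra h
      push_neg at h
      exact hnspec k (hk _ (by omega))
    have hn1 : ∀ᶠ k in atTop, 1 ≤ n k := hnt.eventually_ge_atTop 1
    set u : ℕ → X := fun k => ginv^[n k - 1] (x k) with hudef
    have hut : Tendsto u atTop (𝓝 p) := by
      refine lemC u (fun k => n k - 1) (by
        rw [Filter.tendsto_atTop]
        intro M
        filter_upwards [hnt.eventually_ge_atTop (M + 1)] with k hk
        omega) ?_
      filter_upwards [hn1] with k hk m hm
      have hall : ∀ j ≤ n k - 1, ginv^[j] (x k) ∈ K := fun j hj => hnmin k j (by omega)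
      rw [hudef]
      simp only
      rw [lemA (x k) (n k - 1) hall m hm]
      exact hall _ (by omega)
    have hgu : Tendsto (fun k => ginv (u k)) atTop (𝓝 p) := by
      have := hginvCA.tendsto.comp hut
      rwa [hginvp] at this
    have hevK : ∀ᶠ k in atTop, ginv (u k) ∈ K := hgu.eventually (by exact hKn)
    obtain ⟨k, hk1, hk2⟩ := (hevK.and hn1).exists
    apply hnspec k
    have : ginv^[n k] (x k) = ginv (ginv^[n k - 1] (x k)) := by
      conv_lhs => rw [show n k = (n k - 1) + 1 by omega]
      rw [Function.iterate_succ_apply']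
    rw [this]
    exact hk1
  refine ⟨V, hVmem, ?_⟩
  rw [Metric.tendstoUniformlyOn_iff]
  by_contra hcon
  push_neg at hcon
  obtain ⟨ε, hε, hfreq⟩ := hcon
  have hfreq' : ∃ᶠ m in atTop, ∃ x ∈ V, ε ≤ dist p (ginv^[m] x) := by
    refine hfreq.mono ?_
    intro m hm
    exact hm
  obtain ⟨φ, hφ, hφP⟩ := Filter.extraction_of_frequently_atTop hfreq'
  choose x hxV hxd using hφP
  set u : ℕ → X := fun k => ginv^[φ k] (x k) with hudef
  have hut : Tendsto u atTop (𝓝 p) := by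
    refine lemC u φ hφ.tendsto_atTop ?_
    filter_upwards with k m hm
    rw [hudef]
    simp only
    rw [lemA (x k) (φ k) (fun j _ => hxV k j) m hm]
    exact hxV k _
  have : Tendsto (fun k => dist p (u k)) atTop (𝓝 0) := by
    simpa [dist_comm] using tendsto_iff_dist_tendsto_zero.mp hut
  obtain ⟨k, hk⟩ := (this.eventually (eventually_lt_nhds hε)).exists
  exact absurd (hxd k) (not_le.2 hk)
end

section
/- Define σ₁ = 1 and, for r ≥ 2, σ_r = d · Σ_{k=2}^{r} Σ_{r₁+⋯+r_k = r, r_i ≥ 1} σ_{r₁} ⋯ σ_{r_k}, where d ≥ 1 is a fixed positive integer. Then there exists a constant C > 0 such that σ_r ≤ C^r for all r ≥ 1; equivalently, sup_{r ≥ 1} (1/r)·log σ_r < ∞. -/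
open Topology Filter

noncomputable def hfun (n : ℕ) : ℝ := if n = 0 then 0 else 1 / (n : ℝ) ^ 2

lemma hfun_nonneg (n : ℕ) : 0 ≤ hfun n := by
  unfold hfun; split <;> positivity

lemma hfun_zero : hfun 0 = 0 := by simp [hfun]

lemma hfun_one : hfun 1 = 1 := by simp [hfun]

lemma hfun_le_one (n : ℕ) : hfun n ≤ 1 := by
  unfold hfun
  split
  · norm_num
  · rename_i h
    have h1 : (1:ℝ) ≤ (n:ℝ) := by exact_mod_cast Nat.one_le_iff_ne_zero.2 h
    rw [div_le_one (by positivity)]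
    nlinarith

lemma hfun_pos_eq (n : ℕ) (hn : n ≠ 0) : hfun n = 1 / (n : ℝ) ^ 2 := by
  simp [hfun, hn]

/-- partial sums of `1/n²` are bounded by `2`. -/
lemma sum_hfun_le (n : ℕ) : ∑ i ∈ Finset.range (n + 1), hfun i ≤ 2 - 2 / ((n : ℝ) + 1) := by
  induction n with
  | zero => simp [hfun]
  | succ n ih =>
    rw [Finset.sum_range_succ]
    have h1 : hfun (n + 1) ≤ 2 / ((n : ℝ) + 1) - 2 / ((n : ℝ) + 2) := by
      rw [hfun_pos_eq (n+1) (Nat.succ_ne_zero n)]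
      push_cast
      have hN : (0:ℝ) ≤ (n:ℝ) := Nat.cast_nonneg n
      rw [div_sub_div _ _ (by positivity) (by positivity),
        div_le_div_iff₀ (by positivity) (by positivity)]
      ring_nf
      nlinarith
    have e : ((n:ℕ) + 1 : ℕ) = ((n:ℝ) + 1 : ℝ) ∨ True := Or.inr trivial
    push_cast
    have e2 : (2:ℝ) / ((n:ℝ) + 1 + 1) = 2 / ((n:ℝ) + 2) := by ring_nf
    rw [e2]
    linarith

lemma sum_hfun_le_two (n : ℕ) : ∑ i ∈ Finset.range (n + 1), hfun i ≤ 2 := by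
  have h2 : (0:ℝ) ≤ 2 / ((n:ℝ)+1) := by positivity
  linarith [sum_hfun_le n]

lemma hfun_pointwise (a b r : ℕ) (hab : a + b = r) :
    hfun a * hfun b ≤ 4 * hfun r * (hfun a + hfun b) := by
  rcases Nat.eq_zero_or_pos a with ha | ha
  · subst ha
    rw [hfun_zero, zero_mul]
    have := hfun_nonneg b; have := hfun_nonneg r
    positivity
  rcases Nat.eq_zero_or_pos b with hb | hb
  · subst hb
    rw [hfun_zero, mul_zero]
    have := hfun_nonneg a; have := hfun_nonneg r
    positivity
  have hr : r ≠ 0 := by omega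
  rw [hfun_pos_eq a (by omega), hfun_pos_eq b (by omega), hfun_pos_eq r hr]
  have hA : (1:ℝ) ≤ (a:ℝ) := by exact_mod_cast ha
  have hB : (1:ℝ) ≤ (b:ℝ) := by exact_mod_cast hb
  have hR : (r:ℝ) = (a:ℝ) + (b:ℝ) := by exact_mod_cast hab.symm
  have hApos : (0:ℝ) < (a:ℝ) := by linarith
  have hBpos : (0:ℝ) < (b:ℝ) := by linarith
  rw [hR]
  have e1 : (1:ℝ)/(a:ℝ)^2 * (1/(b:ℝ)^2)
      = ((a:ℝ)+(b:ℝ))^2 / ((a:ℝ)^2*(b:ℝ)^2*((a:ℝ)+(b:ℝ))^2) := by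
    field_simp
  have e2 : 4 * (1/((a:ℝ)+(b:ℝ))^2) * (1/(a:ℝ)^2 + 1/(b:ℝ)^2)
      = (4*((b:ℝ)^2+(a:ℝ)^2)) / ((a:ℝ)^2*(b:ℝ)^2*((a:ℝ)+(b:ℝ))^2) := by
    field_simp
  rw [e1, e2]
  gcongr ?x / _
  nlinarith [sq_nonneg ((a:ℝ) - (b:ℝ))]

lemma conv_hfun_le (r : ℕ) :
    ∑ ab ∈ Finset.HasAntidiagonal.antidiagonal r, hfun ab.1 * hfun ab.2 ≤ 16 * hfun r := by
  have step : ∑ ab ∈ Finset.HasAntidiagonal.antidiagonal r, hfun ab.1 * hfun ab.2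
      ≤ ∑ ab ∈ Finset.HasAntidiagonal.antidiagonal r, 4 * hfun r * (hfun ab.1 + hfun ab.2) := by
    refine Finset.sum_le_sum fun ab hab => ?_
    exact hfun_pointwise ab.1 ab.2 r (Finset.HasAntidiagonal.mem_antidiagonal.1 hab)
  have e1 : ∑ ab ∈ Finset.HasAntidiagonal.antidiagonal r, hfun ab.1 ≤ 2 := by
    rw [Finset.Nat.sum_antidiagonal_eq_sum_range_succ (fun a b => hfun a) r]
    exact sum_hfun_le_two r
  have e2 : ∑ ab ∈ Finset.HasAntidiagonal.antidiagonal r, hfun ab.2 ≤ 2 := by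
    rw [Finset.Nat.sum_antidiagonal_eq_sum_range_succ (fun a b => hfun b) r]
    have e := Finset.sum_range_reflect (fun j => hfun j) (r+1)
    simp only [Nat.add_sub_cancel] at e
    calc ∑ k ∈ Finset.range (r+1), hfun (r - k) = ∑ k ∈ Finset.range (r+1), hfun k := e
      _ ≤ 2 := sum_hfun_le_two r
  have hhr := hfun_nonneg r
  calc ∑ ab ∈ Finset.HasAntidiagonal.antidiagonal r, hfun ab.1 * hfun ab.2
      ≤ ∑ ab ∈ Finset.HasAntidiagonal.antidiagonal r, 4 * hfun r * (hfun ab.1 + hfun ab.2) := step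
    _ = 4 * hfun r * ((∑ ab ∈ Finset.HasAntidiagonal.antidiagonal r, hfun ab.1)
          + ∑ ab ∈ Finset.HasAntidiagonal.antidiagonal r, hfun ab.2) := by
        rw [← Finset.mul_sum, Finset.sum_add_distrib]
    _ ≤ 4 * hfun r * (2 + 2) := by
        apply mul_le_mul_of_nonneg_left _ (by positivity)
        linarith
    _ = 16 * hfun r := by ring

lemma tuple_succ_sum (f : ℕ → ℝ) (k r : ℕ) :
    ∑ c ∈ Finset.Nat.antidiagonalTuple (k+1) r, ∏ i, f (c i)
      = ∑ ab ∈ Finset.HasAntidiagonal.antidiagonal r, f ab.1 *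
          ∑ c ∈ Finset.Nat.antidiagonalTuple k ab.2, ∏ i, f (c i) := by
  simp_rw [Finset.mul_sum]
  rw [Finset.sum_sigma' (Finset.HasAntidiagonal.antidiagonal r)
    (fun ab => Finset.Nat.antidiagonalTuple k ab.2) (fun ab c => f ab.1 * ∏ i, f (c i))]
  refine Finset.sum_nbij'
    (fun (c : Fin (k+1) → ℕ) => ⟨(c 0, ∑ i : Fin k, c i.succ), fun (i : Fin k) => c i.succ⟩)
    (fun p => Fin.cons p.1.1 p.2) ?_ ?_ ?_ ?_ ?_
  · intro c hc
    rw [Finset.Nat.mem_antidiagonalTuple] at hc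
    simp only [Finset.mem_sigma, Finset.HasAntidiagonal.mem_antidiagonal, Finset.Nat.mem_antidiagonalTuple]
    constructor
    · rw [← hc, Fin.sum_univ_succ]
    · trivial
  · intro p hp
    rw [Finset.mem_sigma, Finset.HasAntidiagonal.mem_antidiagonal, Finset.Nat.mem_antidiagonalTuple] at hp
    rw [Finset.Nat.mem_antidiagonalTuple, Fin.sum_univ_succ]
    simp [Fin.cons_zero, Fin.cons_succ, hp.2, hp.1]
  · intro c hc
    exact funext fun i => by cases i using Fin.cases <;> simp
  · rintro ⟨⟨a,b⟩,t⟩ hp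
    simp only [Finset.mem_sigma, Finset.HasAntidiagonal.mem_antidiagonal,
      Finset.Nat.mem_antidiagonalTuple] at hp
    simp [hp.2]
  · intro c hc
    simp [Fin.prod_univ_succ, Finset.mul_sum]

/-- The geometric-majorant function. -/
noncomputable def gfun (M : ℝ) (n : ℕ) : ℝ := M⁻¹ * M ^ n * hfun n

lemma gfun_nonneg (M : ℝ) (hM : 1 ≤ M) (n : ℕ) : 0 ≤ gfun M n := by
  have h0 : (0:ℝ) < M := lt_of_lt_of_le one_pos hM
  have := hfun_nonneg n
  unfold gfun
  positivity

lemma tuple_bound (M : ℝ) (hM : 1 ≤ M) :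
    ∀ k, 1 ≤ k → ∀ b : ℕ,
      ∑ c ∈ Finset.Nat.antidiagonalTuple k b, ∏ i, gfun M (c i)
        ≤ (M⁻¹) ^ k * 16 ^ (k - 1) * M ^ b * hfun b := by
  have hMpos : (0:ℝ) < M := lt_of_lt_of_le one_pos hM
  intro k
  induction k with
  | zero => intro h; omega
  | succ k ih =>
    intro _ b
    rcases Nat.eq_zero_or_pos k with hk | hk
    · subst hk
      rw [Finset.Nat.antidiagonalTuple_one b]
      simp only [Finset.sum_singleton, Fin.prod_univ_one, Matrix.cons_val_fin_one]
      rw [gfun]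
      simp [pow_one]
    · have ihk := ih hk
      rw [tuple_succ_sum (gfun M) k b]
      have term : ∀ ab ∈ Finset.HasAntidiagonal.antidiagonal b,
          gfun M ab.1 * ∑ c ∈ Finset.Nat.antidiagonalTuple k ab.2, ∏ i, gfun M (c i)
            ≤ ((M⁻¹) ^ (k+1) * 16 ^ (k-1) * M ^ b) * (hfun ab.1 * hfun ab.2) := by
        rintro ⟨a, c⟩ hab
        have hac : a + c = b := Finset.HasAntidiagonal.mem_antidiagonal.1 hab
        have h1 : gfun M a * ∑ x ∈ Finset.Nat.antidiagonalTuple k c, ∏ i, gfun M (x i)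
            ≤ gfun M a * ((M⁻¹) ^ k * 16 ^ (k-1) * M ^ c * hfun c) :=
          mul_le_mul_of_nonneg_left (ihk c) (gfun_nonneg M hM a)
        refine h1.trans (le_of_eq ?_)
        rw [gfun, ← hac, pow_add]
        ring
      calc ∑ ab ∈ Finset.HasAntidiagonal.antidiagonal b, gfun M ab.1 *
              ∑ c ∈ Finset.Nat.antidiagonalTuple k ab.2, ∏ i, gfun M (c i)
          ≤ ∑ ab ∈ Finset.HasAntidiagonal.antidiagonal b,
              ((M⁻¹) ^ (k+1) * 16 ^ (k-1) * M ^ b) * (hfun ab.1 * hfun ab.2) :=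
            Finset.sum_le_sum term
        _ = ((M⁻¹) ^ (k+1) * 16 ^ (k-1) * M ^ b) *
              ∑ ab ∈ Finset.HasAntidiagonal.antidiagonal b, hfun ab.1 * hfun ab.2 := by
            rw [Finset.mul_sum]
        _ ≤ ((M⁻¹) ^ (k+1) * 16 ^ (k-1) * M ^ b) * (16 * hfun b) := by
            apply mul_le_mul_of_nonneg_left (conv_hfun_le b) (by positivity)
        _ = (M⁻¹) ^ (k+1) * 16 ^ ((k+1) - 1) * M ^ b * hfun b := by
            have e : (k+1) - 1 = (k - 1) + 1 := by omega
            rw [e, pow_succ]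
            ring

/-- The Siegel–Sternberg majorant coefficients `σ_r`, defined by `σ_1 = 1` and
`σ_r = d · Σ_{k=2}^r Σ_{r₁+⋯+r_k=r, r_i ≥ 1} σ_{r₁} ⋯ σ_{r_k}` for `r ≥ 2`,
grow at most geometrically: `σ_r ≤ C^r` for some `C > 0`. -/
theorem stmt13 (d : ℕ) (hd : 1 ≤ d) (σ : ℕ → ℝ) (hσ1 : σ 1 = 1)
    (hrec : ∀ r : ℕ, 2 ≤ r →
      σ r = d * ∑ k ∈ Finset.Icc 2 r,
        ∑ c ∈ Finset.filter
            (fun c : Fin k → ℕ => (∀ i, 1 ≤ c i) ∧ ∑ i, c i = r)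
            (Fintype.piFinset fun _ : Fin k => Finset.range (r + 1)),
          ∏ i, σ (c i)) :
    ∃ C > (0 : ℝ), ∀ r : ℕ, 1 ≤ r → σ r ≤ C ^ r := by
  set M : ℝ := 16 * ((d : ℝ) + 1) with hMdef
  have hdR : (1:ℝ) ≤ (d:ℝ) := by exact_mod_cast hd
  have hM : (1:ℝ) ≤ M := by rw [hMdef]; nlinarith
  have hMpos : (0:ℝ) < M := lt_of_lt_of_le one_pos hM
  -- main claim by strong induction
  have main : ∀ r : ℕ, 1 ≤ r → 0 ≤ σ r ∧ σ r ≤ gfun M r := by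
    intro r
    induction r using Nat.strong_induction_on with
    | _ r IH =>
      intro hr1
      rcases eq_or_lt_of_le hr1 with h1 | h2
      · rw [← h1, hσ1]
        refine ⟨by norm_num, ?_⟩
        rw [gfun, hfun_one, pow_one, mul_one, inv_mul_cancel₀ (ne_of_gt hMpos)]
      · have hr2 : 2 ≤ r := h2
        rw [hrec r hr2]
        have inner : ∀ k ∈ Finset.Icc 2 r,
            (0 ≤ ∑ c ∈ Finset.filter
                (fun c : Fin k → ℕ => (∀ i, 1 ≤ c i) ∧ ∑ i, c i = r)
                (Fintype.piFinset fun _ : Fin k => Finset.range (r + 1)),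
              ∏ i, σ (c i)) ∧
            (∑ c ∈ Finset.filter
                (fun c : Fin k → ℕ => (∀ i, 1 ≤ c i) ∧ ∑ i, c i = r)
                (Fintype.piFinset fun _ : Fin k => Finset.range (r + 1)),
              ∏ i, σ (c i))
              ≤ ∑ c ∈ Finset.Nat.antidiagonalTuple k r, ∏ i, gfun M (c i) := by
          intro k hk
          rw [Finset.mem_Icc] at hk
          have hkk : 2 ≤ k := hk.1
          -- each part is < r
          have hcomp : ∀ c : Fin k → ℕ, (∀ i, 1 ≤ c i) → (∑ i, c i = r) →
              ∀ i, c i < r := by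
            intro c hc1 hcs i
            have hk0 : 0 < k := by omega
            have h1k : 1 < k := by omega
            set j : Fin k := if h : (i : ℕ) = 0 then ⟨1, h1k⟩ else ⟨0, by omega⟩ with hjdef
            have hij : j ≠ i := by
              rcases Nat.eq_zero_or_pos (i : ℕ) with h | h
              · simp only [hjdef, h, dif_pos]
                intro hcon
                have : (1 : ℕ) = (i : ℕ) := congrArg Fin.val hcon
                omega
              · have hne : (i : ℕ) ≠ 0 := by omega
                simp only [hjdef, hne, dif_neg]
                intro hcon
                have : (0 : ℕ) = (i : ℕ) := congrArg Fin.val hcon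
                omega
            have hsum : c i + ∑ m ∈ Finset.univ.erase i, c m = ∑ m, c m :=
              Finset.add_sum_erase Finset.univ c (Finset.mem_univ i)
            have hcj : c j ≤ ∑ m ∈ Finset.univ.erase i, c m :=
              Finset.single_le_sum (f := c) (fun m _ => Nat.zero_le _)
                (Finset.mem_erase.2 ⟨hij, Finset.mem_univ j⟩)
            have := hc1 j
            omega
          constructor
          · refine Finset.sum_nonneg fun c hc => Finset.prod_nonneg fun i _ => ?_
            obtain ⟨h1, h2⟩ := (Finset.mem_filter.1 hc).2
            exact (IH (c i) (hcomp c h1 h2 i) (h1 i)).1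
          · have hterm : ∀ c ∈ Finset.filter
                (fun c : Fin k → ℕ => (∀ i, 1 ≤ c i) ∧ ∑ i, c i = r)
                (Fintype.piFinset fun _ : Fin k => Finset.range (r + 1)),
                ∏ i, σ (c i) ≤ ∏ i, gfun M (c i) := by
              intro c hc
              obtain ⟨h1, h2⟩ := (Finset.mem_filter.1 hc).2
              exact Finset.prod_le_prod
                (fun i _ => (IH (c i) (hcomp c h1 h2 i) (h1 i)).1)
                (fun i _ => (IH (c i) (hcomp c h1 h2 i) (h1 i)).2)
            have hsub : Finset.filter
                (fun c : Fin k → ℕ => (∀ i, 1 ≤ c i) ∧ ∑ i, c i = r)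
                (Fintype.piFinset fun _ : Fin k => Finset.range (r + 1))
                ⊆ Finset.Nat.antidiagonalTuple k r := by
              intro c hc
              exact Finset.Nat.mem_antidiagonalTuple.2 (Finset.mem_filter.1 hc).2.2
            calc ∑ c ∈ Finset.filter
                  (fun c : Fin k → ℕ => (∀ i, 1 ≤ c i) ∧ ∑ i, c i = r)
                  (Fintype.piFinset fun _ : Fin k => Finset.range (r + 1)),
                  ∏ i, σ (c i)
                ≤ ∑ c ∈ Finset.filter
                  (fun c : Fin k → ℕ => (∀ i, 1 ≤ c i) ∧ ∑ i, c i = r)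
                  (Fintype.piFinset fun _ : Fin k => Finset.range (r + 1)),
                  ∏ i, gfun M (c i) := Finset.sum_le_sum hterm
              _ ≤ ∑ c ∈ Finset.Nat.antidiagonalTuple k r, ∏ i, gfun M (c i) :=
                  Finset.sum_le_sum_of_subset_of_nonneg hsub
                    (fun c _ _ => Finset.prod_nonneg fun i _ => gfun_nonneg M hM (c i))
        have hd0 : (0:ℝ) ≤ (d:ℝ) := by positivity
        constructor
        · exact mul_nonneg hd0 (Finset.sum_nonneg fun k hk => (inner k hk).1)
        · -- upper bound
          have step1 : σ r ≤ (d:ℝ) * ∑ k ∈ Finset.Icc 2 r,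
              (M⁻¹) ^ k * 16 ^ (k - 1) * M ^ r * hfun r := by
            rw [hrec r hr2]
            refine mul_le_mul_of_nonneg_left (Finset.sum_le_sum fun k hk => ?_) hd0
            refine (inner k hk).2.trans (tuple_bound M hM k ?_ r)
            rw [Finset.mem_Icc] at hk; omega
          rw [← hrec r hr2]
          refine step1.trans ?_
          -- arithmetic with the geometric series
          set y : ℝ := ((d:ℝ) + 1)⁻¹ with hydef
          have hy0 : (0:ℝ) ≤ y := by positivity
          have hy1 : y < 1 := by
            rw [hydef]
            rw [inv_lt_one_iff₀]
            right; linarith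
          have hyne : y ≠ 1 := ne_of_lt hy1
          have hx : (16:ℝ) * M⁻¹ = y := by
            rw [hydef, hMdef]
            rw [mul_inv, ← mul_assoc, mul_inv_cancel₀ (by norm_num : (16:ℝ) ≠ 0), one_mul]
          have hterm2 : ∀ k ∈ Finset.Icc 2 r,
              (M⁻¹) ^ k * 16 ^ (k - 1) = M⁻¹ * y ^ (k - 1) := by
            intro k hk
            rw [Finset.mem_Icc] at hk
            have hk1 : 1 ≤ k := by omega
            have e : k = (k - 1) + 1 := by omega
            rw [← hx]
            calc (M⁻¹) ^ k * 16 ^ (k-1) = M⁻¹ ^ ((k-1)+1) * 16 ^ (k-1) := by rw [← e]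
              _ = M⁻¹ * (M⁻¹ ^ (k-1) * 16 ^ (k-1)) := by rw [pow_succ]; ring
              _ = M⁻¹ * (16 * M⁻¹) ^ (k-1) := by rw [mul_pow]; ring_nf
          have hsum : ∑ k ∈ Finset.Icc 2 r, y ^ (k - 1) ≤ y * (1 - y)⁻¹ := by
            have e1 : Finset.Icc 2 r = Finset.Ico 2 (r + 1) := by
              rw [Finset.Ico_add_one_right_eq_Icc]
            rw [e1, Finset.sum_Ico_eq_sum_range]
            have e2 : ∀ i ∈ Finset.range (r + 1 - 2), y ^ (2 + i - 1) = y * y ^ i := by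
              intro i _
              have : 2 + i - 1 = i + 1 := by omega
              rw [this, pow_succ]; ring
            rw [Finset.sum_congr rfl e2, ← Finset.mul_sum]
            refine mul_le_mul_of_nonneg_left ?_ hy0
            have hgeom := geom_sum_eq hyne (r + 1 - 2)
            have h1y : (0:ℝ) < 1 - y := by linarith
            have hpow : (0:ℝ) ≤ y ^ (r + 1 - 2) := by positivity
            have e3 : (y ^ (r+1-2) - 1)/(y - 1) = (1 - y ^ (r+1-2))/(1 - y) := by
              rw [div_eq_div_iff (by linarith : (y:ℝ) - 1 ≠ 0) (ne_of_gt h1y)]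
              ring
            rw [hgeom, e3, ← one_div, div_le_div_iff₀ h1y h1y]
            nlinarith
          have hyd : y * (1 - y)⁻¹ = ((d:ℝ))⁻¹ := by
            have hdne : (d:ℝ) ≠ 0 := by positivity
            have hdne1 : (d:ℝ) + 1 ≠ 0 := by positivity
            rw [hydef]
            rw [show (1:ℝ) - ((d:ℝ)+1)⁻¹ = (d:ℝ)/((d:ℝ)+1) by field_simp; ring]
            field_simp
          have efac : ∑ k ∈ Finset.Icc 2 r, (M⁻¹) ^ k * 16 ^ (k - 1) * M ^ r * hfun r
              = (∑ k ∈ Finset.Icc 2 r, (M⁻¹) ^ k * 16 ^ (k - 1)) * (M ^ r * hfun r) := by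
            rw [Finset.sum_mul]
            exact Finset.sum_congr rfl fun k _ => by ring
          have hsum2 : ∑ k ∈ Finset.Icc 2 r, (M⁻¹) ^ k * 16 ^ (k - 1)
              ≤ M⁻¹ * ((d:ℝ))⁻¹ := by
            rw [Finset.sum_congr rfl hterm2, ← Finset.mul_sum]
            calc M⁻¹ * ∑ k ∈ Finset.Icc 2 r, y ^ (k - 1)
                ≤ M⁻¹ * (y * (1 - y)⁻¹) :=
                  mul_le_mul_of_nonneg_left hsum (by positivity)
              _ = M⁻¹ * ((d:ℝ))⁻¹ := by rw [hyd]
          have hMr : (0:ℝ) ≤ M ^ r * hfun r := by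
            have := hfun_nonneg r
            positivity
          have hdne : (d:ℝ) ≠ 0 := by positivity
          calc (d:ℝ) * ∑ k ∈ Finset.Icc 2 r, (M⁻¹) ^ k * 16 ^ (k - 1) * M ^ r * hfun r
              = (d:ℝ) * ((∑ k ∈ Finset.Icc 2 r, (M⁻¹) ^ k * 16 ^ (k - 1)) * (M ^ r * hfun r)) := by
                rw [efac]
            _ ≤ (d:ℝ) * ((M⁻¹ * ((d:ℝ))⁻¹) * (M ^ r * hfun r)) := by
                exact mul_le_mul_of_nonneg_left
                  (mul_le_mul_of_nonneg_right hsum2 hMr) hd0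
            _ = gfun M r := by
                rw [gfun]
                field_simp
  refine ⟨M, hMpos, fun r hr => ?_⟩
  have h := (main r hr).2
  have hle : gfun M r ≤ M ^ r := by
    rw [gfun]
    have h1 : M⁻¹ ≤ 1 := inv_le_one_of_one_le₀ hM
    have h2 := hfun_le_one r
    have h3 := hfun_nonneg r
    have h4 : M⁻¹ * hfun r ≤ 1 :=
      mul_le_one₀ h1 h3 h2
    calc M⁻¹ * M ^ r * hfun r = (M⁻¹ * hfun r) * M ^ r := by ring
      _ ≤ 1 * M ^ r := mul_le_mul_of_nonneg_right h4 (pow_pos hMpos r).le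
      _ = M ^ r := one_mul _
  linarith
end

section
/- Let f : ℂ → ℂ be holomorphic and injective on a disc D_r around 0 with f(0) = 0 and f(D_r) ⊆ D_r, with multiplier λ = f'(0), |λ| = 1. Suppose 0 is a stable fixed point, i.e., for every neighbourhood U ⊆ D_r of 0 there is a neighbourhood V of 0 with f^[n](V) ⊆ U for all n ∈ ℕ. Then f is holomorphically linearisable at 0: there exists a holomorphic germ φ at 0 with φ(0) = 0, φ'(0) = 1, and φ ∘ f = λ·φ near 0. -/
open Topology Filter Metric

/-- Equicontinuity (uniform Lipschitz) + pointwise convergence along a filter on a compact set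
implies uniform convergence. -/
lemma aux_tendstoUniformlyOn_of_lipschitz {ι : Type*} (F : ι → ℂ → ℂ) (g : ℂ → ℂ)
    (ℱ : Filter ι) [ℱ.NeBot] (K : Set ℂ) (hK : IsCompact K) {L : ℝ} (hL : 0 ≤ L)
    (hlip : ∀ i, ∀ x ∈ K, ∀ y ∈ K, dist (F i x) (F i y) ≤ L * dist x y)
    (hpt : ∀ x ∈ K, Tendsto (fun i => F i x) ℱ (𝓝 (g x))) :
    TendstoUniformlyOn F g ℱ K := by
  have hglip : ∀ x ∈ K, ∀ y ∈ K, dist (g x) (g y) ≤ L * dist x y := by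
    intro x hx y hy
    have h1 : Tendsto (fun i => dist (F i x) (F i y)) ℱ (𝓝 (dist (g x) (g y))) :=
      (hpt x hx).dist (hpt y hy)
    exact le_of_tendsto h1 (Filter.Eventually.of_forall fun i => hlip i x hx y hy)
  rw [Metric.tendstoUniformlyOn_iff]
  intro ε hε
  have hL1 : (0:ℝ) < L + 1 := by linarith
  set δ : ℝ := ε / 4 / (L + 1) with hδdef
  have hδ : 0 < δ := by positivity
  obtain ⟨t, htK, htfin, hcov⟩ := finite_cover_balls_of_compact hK hδ
  have hev : ∀ᶠ i in ℱ, ∀ c ∈ t, dist (g c) (F i c) < ε / 4 := by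
    rw [eventually_all_finite htfin]
    intro c hc
    have := hpt c (htK hc)
    have : Tendsto (fun i => dist (g c) (F i c)) ℱ (𝓝 (dist (g c) (g c))) :=
      tendsto_const_nhds.dist (hpt c (htK hc))
    simp only [dist_self] at this
    exact (this.eventually (eventually_lt_nhds (by positivity : (0:ℝ) < ε / 4)))
  filter_upwards [hev] with i hi x hx
  obtain ⟨c, hc, hxc⟩ : ∃ c ∈ t, x ∈ ball c δ := by
    have := hcov hx
    simpa using this
  have hcK : c ∈ K := htK hc
  have hxc' : dist x c ≤ δ := le_of_lt (by simpa [dist_comm] using hxc)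
  have hLd : L * dist x c ≤ ε / 4 := by
    calc L * dist x c ≤ (L + 1) * δ := by
          apply mul_le_mul (by linarith) hxc' dist_nonneg (by linarith)
      _ = ε / 4 := by rw [hδdef]; field_simp
  calc dist (g x) (F i x) ≤ dist (g x) (g c) + dist (g c) (F i c) + dist (F i c) (F i x) :=
        dist_triangle4 _ _ _ _
    _ ≤ L * dist x c + dist (g c) (F i c) + L * dist c x := by
        gcongr
        · exact hglip x hx c hcK
        · exact hlip i c hcK x hx
    _ < ε / 4 + ε / 4 + ε / 4 := by
        rw [dist_comm c x]
        have h1 := hi c hc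
        have h2 := hLd
        linarith
    _ < ε := by linarith

/-- A neutral (`‖f'(0)‖ = 1`) injective holomorphic germ with a stable fixed point `0` is
holomorphically linearisable: there is a holomorphic `φ` near `0` with `φ(0) = 0`,
`φ'(0) = 1` and `φ ∘ f = l·φ` near `0`. -/
theorem stmt14 (r : ℝ) (hr : 0 < r) (f : ℂ → ℂ)
    (hf : DifferentiableOn ℂ f (Metric.ball 0 r))
    (hinj : Set.InjOn f (Metric.ball 0 r))
    (hf0 : f 0 = 0)
    (hmaps : Set.MapsTo f (Metric.ball 0 r) (Metric.ball 0 r))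
    (l : ℂ) (hl : deriv f 0 = l) (hmod : ‖l‖ = 1)
    (hstab : ∀ U ∈ 𝓝 (0 : ℂ), U ⊆ Metric.ball 0 r →
      ∃ V ∈ 𝓝 (0 : ℂ), ∀ n : ℕ, ∀ z ∈ V, f^[n] z ∈ U) :
    ∃ φ : ℂ → ℂ, AnalyticAt ℂ φ 0 ∧ φ 0 = 0 ∧ deriv φ 0 = 1 ∧
      ∀ᶠ z in 𝓝 (0 : ℂ), φ (f z) = l * φ z := by
  classical
  have hl0 : l ≠ 0 := by
    intro h; rw [h] at hmod; simp at hmod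
  have hr2 : (0:ℝ) < r / 2 := by linarith
  have hUsub : Metric.ball (0:ℂ) (r/2) ⊆ Metric.ball 0 r := Metric.ball_subset_ball (by linarith)
  obtain ⟨V, hV, hVstab⟩ := hstab (Metric.ball 0 (r/2)) (Metric.ball_mem_nhds _ hr2) hUsub
  obtain ⟨ρ₁, hρ₁, hρ₁V⟩ := Metric.mem_nhds_iff.mp hV
  set ρ : ℝ := min ρ₁ (r/2) with hρdef
  have hρ0 : 0 < ρ := lt_min hρ₁ hr2
  have hρr : ρ ≤ r / 2 := min_le_right _ _
  have hρV : Metric.ball (0:ℂ) ρ ⊆ V := (Metric.ball_subset_ball (min_le_left _ _)).trans hρ₁V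
  have hρball : Metric.ball (0:ℂ) ρ ⊆ Metric.ball 0 r :=
    Metric.ball_subset_ball (by linarith)
  -- orbits stay in ball 0 (r/2)
  have horb : ∀ n : ℕ, ∀ z ∈ Metric.ball (0:ℂ) ρ, f^[n] z ∈ Metric.ball (0:ℂ) (r/2) :=
    fun n z hz => hVstab n z (hρV hz)
  -- iterates are differentiable on ball 0 ρ
  have hiterdiff : ∀ j : ℕ, DifferentiableOn ℂ (f^[j]) (Metric.ball 0 ρ) := by
    intro j
    induction j with
    | zero => simpa [Function.iterate_zero] using differentiableOn_id
    | succ j ih =>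
      rw [Function.iterate_succ']
      exact hf.comp ih fun z hz => hUsub (horb j z hz)
  have hiter0 : ∀ j : ℕ, f^[j] 0 = 0 := fun j => Function.iterate_fixed hf0 j
  -- derivative of f at 0
  have hdf : HasDerivAt f l 0 := by
    have h := (hf.differentiableAt (isOpen_ball.mem_nhds (mem_ball_self hr))).hasDerivAt
    rwa [hl] at h
  have hiterderiv : ∀ j : ℕ, HasDerivAt (f^[j]) (l ^ j) 0 := by
    intro j
    induction j with
    | zero => simpa using hasDerivAt_id (0:ℂ)
    | succ j ih =>
      rw [Function.iterate_succ']
      have h1 : HasDerivAt f l (f^[j] 0) := by rw [hiter0 j]; exact hdf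
      have := h1.comp 0 ih
      rw [pow_succ']; exact this
  -- the Cesàro averages
  set Φ : ℕ → ℂ → ℂ :=
    fun k z => (k:ℂ)⁻¹ * ∑ j ∈ Finset.range k, l⁻¹ ^ j * f^[j] z with hΦdef
  have hnormterm : ∀ (j : ℕ) (z : ℂ), ‖l⁻¹ ^ j * f^[j] z‖ = ‖f^[j] z‖ := by
    intro j z
    rw [norm_mul, norm_pow, norm_inv, hmod]
    simp
  have hΦbound : ∀ k : ℕ, ∀ z ∈ Metric.ball (0:ℂ) ρ, ‖Φ k z‖ ≤ r / 2 := by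
    intro k z hz
    rcases Nat.eq_zero_or_pos k with rfl | hk
    · simp [hΦdef]; linarith
    have hknz : (k:ℝ) ≠ 0 := Nat.cast_ne_zero.2 hk.ne'
    have hsum : ‖∑ j ∈ Finset.range k, l⁻¹ ^ j * f^[j] z‖ ≤ (k:ℝ) * (r/2) := by
      calc ‖∑ j ∈ Finset.range k, l⁻¹ ^ j * f^[j] z‖
          ≤ ∑ j ∈ Finset.range k, ‖l⁻¹ ^ j * f^[j] z‖ := norm_sum_le _ _
        _ ≤ ∑ _j ∈ Finset.range k, (r/2) := by
            apply Finset.sum_le_sum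
            intro j _
            rw [hnormterm]
            exact le_of_lt (mem_ball_zero_iff.mp (horb j z hz))
        _ = (k:ℝ) * (r/2) := by simp [mul_comm]
    calc ‖Φ k z‖ = (k:ℝ)⁻¹ * ‖∑ j ∈ Finset.range k, l⁻¹ ^ j * f^[j] z‖ := by
          rw [hΦdef]; rw [norm_mul, norm_inv, Complex.norm_natCast]
      _ ≤ (k:ℝ)⁻¹ * ((k:ℝ) * (r/2)) := by
          apply mul_le_mul_of_nonneg_left hsum (by positivity)
      _ = r / 2 := by field_simp
  have hΦdiff : ∀ k : ℕ, DifferentiableOn ℂ (Φ k) (Metric.ball 0 ρ) := by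
    intro k
    apply DifferentiableOn.const_mul
    exact DifferentiableOn.fun_sum fun j _ => (hiterdiff j).const_mul _
  have hΦderiv : ∀ k : ℕ, k ≠ 0 → HasDerivAt (Φ k) 1 0 := by
    intro k hk
    have h1 : HasDerivAt (fun z => ∑ j ∈ Finset.range k, l⁻¹ ^ j * f^[j] z)
        (∑ j ∈ Finset.range k, l⁻¹ ^ j * l ^ j) 0 :=
      HasDerivAt.fun_sum fun j _ => (hiterderiv j).const_mul _
    have h2 := h1.const_mul ((k:ℂ)⁻¹)
    have h3 : (k:ℂ)⁻¹ * ∑ j ∈ Finset.range k, l⁻¹ ^ j * l ^ j = 1 := by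
      have : ∀ j ∈ Finset.range k, l⁻¹ ^ j * l ^ j = 1 := by
        intro j _
        rw [← mul_pow, inv_mul_cancel₀ hl0, one_pow]
      rw [Finset.sum_congr rfl this]
      simp [Finset.sum_const]
      exact inv_mul_cancel₀ (Nat.cast_ne_zero.2 hk)
    rw [← h3]
    exact h2
  -- uniform Lipschitz bound on a small closed ball
  set δ : ℝ := ρ / 8 with hδdef
  have hδ0 : 0 < δ := by positivity
  set L : ℝ := (r + 1) / (ρ / 2) with hLdef
  have hL0 : 0 ≤ L := by positivity
  have hδρ : Metric.closedBall (0:ℂ) δ ⊆ Metric.ball 0 ρ :=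
    Metric.closedBall_subset_ball (by linarith)
  have hlip : ∀ k : ℕ, ∀ x ∈ Metric.closedBall (0:ℂ) δ, ∀ y ∈ Metric.closedBall (0:ℂ) δ,
      dist (Φ k x) (Φ k y) ≤ L * dist x y := by
    intro k x hx y hy
    have hysub : Metric.ball y (ρ/2) ⊆ Metric.ball (0:ℂ) ρ := by
      intro w hw
      rw [mem_ball_zero_iff]
      have h1 : ‖w - y‖ < ρ / 2 := by rw [← dist_eq_norm]; exact hw
      have h2 : ‖y‖ ≤ δ := mem_closedBall_zero_iff.mp hy
      have h3 : ‖w‖ ≤ ‖w - y‖ + ‖y‖ := by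
        simpa using norm_add_le (w - y) y
      rw [hδdef] at h2
      linarith
    have hmapsΦ : Set.MapsTo (Φ k) (Metric.ball y (ρ/2)) (Metric.ball (Φ k y) (r+1)) := by
      intro w hw
      rw [Metric.mem_ball, dist_eq_norm]
      have h1 : ‖Φ k w‖ ≤ r/2 := hΦbound k w (hysub hw)
      have h2 : ‖Φ k y‖ ≤ r/2 := hΦbound k y (hδρ hy)
      calc ‖Φ k w - Φ k y‖ ≤ ‖Φ k w‖ + ‖Φ k y‖ := norm_sub_le _ _
        _ < r + 1 := by linarith
    have hxy : x ∈ Metric.ball y (ρ/2) := by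
      rw [Metric.mem_ball]
      have h1 : dist x 0 ≤ δ := Metric.mem_closedBall.mp hx
      have h2 : dist y 0 ≤ δ := Metric.mem_closedBall.mp hy
      have h3 : dist x y ≤ dist x 0 + dist 0 y := dist_triangle _ _ _
      rw [dist_comm (0:ℂ) y] at h3
      rw [hδdef] at h1 h2
      linarith
    have h := Complex.dist_le_div_mul_dist_of_mapsTo_ball ((hΦdiff k).mono hysub) (hmapsΦ.mono_right Metric.ball_subset_closedBall) hxy
    calc dist (Φ k x) (Φ k y) ≤ (r+1) / (ρ/2) * dist x y := h
      _ = L * dist x y := by rw [hLdef]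
  -- the ultrafilter
  set 𝒰 : Ultrafilter ℕ := Ultrafilter.of atTop with h𝒰def
  have h𝒰 : (𝒰 : Filter ℕ) ≤ atTop := Ultrafilter.of_le _
  -- pointwise convergence along the ultrafilter
  have hconv : ∀ z ∈ Metric.ball (0:ℂ) ρ,
      ∃ w, Tendsto (fun k => Φ k z) (𝒰 : Filter ℕ) (𝓝 w) := by
    intro z hz
    have hmem : Metric.closedBall (0:ℂ) (r/2) ∈ Ultrafilter.map (fun k => Φ k z) 𝒰 := by
      rw [Ultrafilter.mem_map]
      exact Filter.univ_mem' fun k => mem_closedBall_zero_iff.2 (hΦbound k z hz)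
    obtain ⟨w, _, hw⟩ := (isCompact_closedBall (0:ℂ) (r/2)).ultrafilter_le_nhds'
      (Ultrafilter.map (fun k => Φ k z) 𝒰) hmem
    exact ⟨w, hw⟩
  set φ : ℂ → ℂ := fun z => limUnder (𝒰 : Filter ℕ) (fun k => Φ k z) with hφdef
  have hφ : ∀ z ∈ Metric.ball (0:ℂ) ρ,
      Tendsto (fun k => Φ k z) (𝒰 : Filter ℕ) (𝓝 (φ z)) :=
    fun z hz => tendsto_nhds_limUnder (hconv z hz)
  -- uniform convergence on the small closed ball
  have hunif : TendstoUniformlyOn Φ φ (𝒰 : Filter ℕ) (Metric.closedBall 0 δ) :=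
    aux_tendstoUniformlyOn_of_lipschitz Φ φ (𝒰 : Filter ℕ) _ (isCompact_closedBall _ _) hL0
      hlip (fun x hx => hφ x (hδρ hx))
  have hsubδρ : Metric.ball (0:ℂ) δ ⊆ Metric.ball 0 ρ :=
    Metric.ball_subset_ball (by linarith)
  have htlu : TendstoLocallyUniformlyOn Φ φ (𝒰 : Filter ℕ) (Metric.ball 0 δ) :=
    hunif.tendstoLocallyUniformlyOn.mono Metric.ball_subset_closedBall
  have hΦdiffδ : ∀ᶠ k in (𝒰 : Filter ℕ), DifferentiableOn ℂ (Φ k) (Metric.ball 0 δ) :=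
    Filter.Eventually.of_forall fun k => (hΦdiff k).mono hsubδρ
  have hφdiff : DifferentiableOn ℂ φ (Metric.ball 0 δ) :=
    htlu.differentiableOn hΦdiffδ isOpen_ball
  -- derivative at 0
  have hderiv0 : deriv φ 0 = 1 := by
    have h10 : Tendsto (fun k => deriv (Φ k) 0) (𝒰 : Filter ℕ) (𝓝 (deriv φ 0)) :=
      (htlu.deriv hΦdiffδ isOpen_ball).tendsto_at (mem_ball_self hδ0)
    have hev : (fun k => deriv (Φ k) 0) =ᶠ[(𝒰 : Filter ℕ)] fun _ => (1:ℂ) := by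
      apply Filter.Eventually.filter_mono h𝒰
      filter_upwards [eventually_ge_atTop 1] with k hk
      exact (hΦderiv k (by omega)).deriv
    have h11 : Tendsto (fun k => deriv (Φ k) 0) (𝒰 : Filter ℕ) (𝓝 1) :=
      Tendsto.congr' hev.symm tendsto_const_nhds
    exact tendsto_nhds_unique h10 h11
  -- value at 0
  have hφ0 : φ 0 = 0 := by
    have h1 : ∀ k : ℕ, Φ k 0 = 0 := by
      intro k
      simp [hΦdef, hiter0]
    have h2 : Tendsto (fun k => Φ k 0) (𝒰 : Filter ℕ) (𝓝 0) := by
      simpa [funext h1] using (tendsto_const_nhds : Tendsto (fun _ : ℕ => (0:ℂ)) _ (𝓝 0))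
    exact tendsto_nhds_unique (hφ 0 (mem_ball_self hρ0)) h2
  -- the functional equation near 0
  have hfc : ContinuousAt f 0 :=
    (hf.differentiableAt (isOpen_ball.mem_nhds (mem_ball_self hr))).continuousAt
  have hnhds : ∀ᶠ z in 𝓝 (0:ℂ), z ∈ Metric.ball (0:ℂ) δ ∧ f z ∈ Metric.ball (0:ℂ) δ := by
    have h1 : ∀ᶠ z in 𝓝 (0:ℂ), f z ∈ Metric.ball (0:ℂ) δ := by
      have := hfc.preimage_mem_nhds (by rw [hf0]; exact Metric.ball_mem_nhds _ hδ0)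
      exact this
    filter_upwards [h1, Metric.ball_mem_nhds (0:ℂ) hδ0] with z h2 h3
    exact ⟨h3, h2⟩
  have hfeq : ∀ᶠ z in 𝓝 (0:ℂ), φ (f z) = l * φ z := by
    filter_upwards [hnhds] with z hz
    obtain ⟨hzδ, hfzδ⟩ := hz
    have hzρ : z ∈ Metric.ball (0:ℂ) ρ := hsubδρ hzδ
    have hfzρ : f z ∈ Metric.ball (0:ℂ) ρ := hsubδρ hfzδ
    -- the key algebraic identity
    have key : ∀ k : ℕ, Φ k (f z) = l * Φ k z + (k:ℂ)⁻¹ * (l * (l⁻¹ ^ k * f^[k] z - z)) := by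
      intro k
      have hsum1 : ∑ j ∈ Finset.range k, l⁻¹ ^ j * f^[j] (f z)
          = ∑ j ∈ Finset.range k, l⁻¹ ^ j * f^[j+1] z := by
        apply Finset.sum_congr rfl
        intro j _
        rw [← Function.iterate_succ_apply]
      have hll : ∀ j : ℕ, (l⁻¹:ℂ) ^ j = l * l⁻¹ ^ (j+1) := by
        intro j
        rw [pow_succ']
        rw [← mul_assoc, mul_inv_cancel₀ hl0, one_mul]
      have hsum2 : ∑ j ∈ Finset.range k, l⁻¹ ^ j * f^[j+1] z
          = l * ∑ j ∈ Finset.range k, l⁻¹ ^ (j+1) * f^[j+1] z := by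
        rw [Finset.mul_sum]
        apply Finset.sum_congr rfl
        intro j _
        rw [hll j]; ring
      have hsum3 : ∑ j ∈ Finset.range k, l⁻¹ ^ (j+1) * f^[j+1] z
          = (∑ j ∈ Finset.range k, l⁻¹ ^ j * f^[j] z) + l⁻¹ ^ k * f^[k] z - z := by
        have h4 := Finset.sum_range_succ' (fun j => (l⁻¹:ℂ) ^ j * f^[j] z) k
        have h5 := Finset.sum_range_succ (fun j => (l⁻¹:ℂ) ^ j * f^[j] z) k
        simp only [pow_zero, Function.iterate_zero, id_eq, one_mul] at h4
        rw [h5] at h4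
        linear_combination -h4
      show (k:ℂ)⁻¹ * ∑ j ∈ Finset.range k, l⁻¹ ^ j * f^[j] (f z)
          = l * ((k:ℂ)⁻¹ * ∑ j ∈ Finset.range k, l⁻¹ ^ j * f^[j] z)
            + (k:ℂ)⁻¹ * (l * (l⁻¹ ^ k * f^[k] z - z))
      rw [hsum1, hsum2, hsum3]
      ring
    -- the error term tends to zero
    have herr : Tendsto (fun k : ℕ => (k:ℂ)⁻¹ * (l * (l⁻¹ ^ k * f^[k] z - z)))
        atTop (𝓝 0) := by
      apply squeeze_zero_norm (a := fun k : ℕ => (k:ℝ)⁻¹ * (r/2 + ρ))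
      · intro k
        have h1 : ‖l⁻¹ ^ k * f^[k] z - z‖ ≤ r/2 + ρ := by
          have h2 : ‖l⁻¹ ^ k * f^[k] z‖ = ‖f^[k] z‖ := hnormterm k z
          have h3 : ‖f^[k] z‖ < r/2 := mem_ball_zero_iff.mp (horb k z hzρ)
          have h4 : ‖z‖ < ρ := mem_ball_zero_iff.mp hzρ
          calc ‖l⁻¹ ^ k * f^[k] z - z‖ ≤ ‖l⁻¹ ^ k * f^[k] z‖ + ‖z‖ := norm_sub_le _ _
            _ ≤ r/2 + ρ := by rw [h2]; linarith
        calc ‖(k:ℂ)⁻¹ * (l * (l⁻¹ ^ k * f^[k] z - z))‖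
            = (k:ℝ)⁻¹ * ‖l⁻¹ ^ k * f^[k] z - z‖ := by
              rw [norm_mul, norm_mul, hmod, one_mul, norm_inv, Complex.norm_natCast]
          _ ≤ (k:ℝ)⁻¹ * (r/2 + ρ) := by
              apply mul_le_mul_of_nonneg_left h1 (by positivity)
      · have := tendsto_inv_atTop_nhds_zero_nat.mul_const (r/2 + ρ)
        simpa using this
    have h2 : Tendsto (fun k => Φ k (f z)) (𝒰 : Filter ℕ) (𝓝 (l * φ z)) := by
      have ha : Tendsto (fun k => l * Φ k z) (𝒰 : Filter ℕ) (𝓝 (l * φ z)) :=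
        (hφ z hzρ).const_mul l
      have hb := (herr.mono_left h𝒰)
      have hc := ha.add hb
      rw [add_zero] at hc
      exact hc.congr fun k => (key k).symm
    exact tendsto_nhds_unique (hφ (f z) hfzρ) h2
  exact ⟨φ, hφdiff.analyticAt (isOpen_ball.mem_nhds (mem_ball_self hδ0)), hφ0, hderiv0, hfeq⟩
end
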